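/- Let E be a real Banach space, let e : ℝ → E be continuous, and let t, h ∈ ℝ with h ≥ 0. Then −(1/12) ∫₀^h ζ ( ∫₀^ζ ( ∫₀^χ ( e(t+χ) − e(t+ν) ) dν ) dχ ) dζ = (1/36) ∫₀^h ( 2ζ³ − 3h²ζ + h³ ) e(t+ζ) dζ. -/

import Mathlib

open intervalIntegral MeasureTheory

theorem p1_integral_reduction {E : Type*} [NormedAddCommGroup E] [NormedSpace ℝ E]
    [CompleteSpace E] (e : ℝ → E) (he : Continuous e) (t h : ℝ) (hh : 0 ≤ h) :
    (-(1 / 12 : ℝ)) •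
        (∫ ζ in (0:ℝ)..h, ζ • ∫ χ in (0:ℝ)..ζ, ∫ ν in (0:ℝ)..χ, (e (t + χ) - e (t + ν)))
      = (1 / 36 : ℝ) • ∫ ζ in (0:ℝ)..h, (2 * ζ ^ 3 - 3 * h ^ 2 * ζ + h ^ 3) • e (t + ζ) := by
  clear hh
  have hce : Continuous fun x => e (t + x) := he.comp (continuous_const.add continuous_id)
  set L : ℝ → E := fun z => ∫ ν in (0:ℝ)..z, e (t + ν) with hLdef
  set K : ℝ → E := fun z => ∫ χ in (0:ℝ)..z, χ • e (t + χ) with hKdef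
  set M : ℝ → E := fun z => ∫ χ in (0:ℝ)..z, χ ^ 3 • e (t + χ) with hMdef
  have hcK : Continuous fun x : ℝ => x • e (t + x) := continuous_id.smul hce
  have hcM : Continuous fun x : ℝ => x ^ 3 • e (t + x) := (continuous_id.pow 3).smul hce
  have hLcont : Continuous L :=
    continuous_primitive (fun a b => hce.intervalIntegrable a b) 0
  have hKcont : Continuous K :=
    continuous_primitive (fun a b => hcK.intervalIntegrable a b) 0
  have hLderiv : ∀ z, HasDerivAt L (e (t + z)) z := fun z =>
    (hce.integral_hasStrictDerivAt 0 z).hasDerivAt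
  have hKderiv : ∀ z, HasDerivAt K (z • e (t + z)) z := fun z =>
    (hcK.integral_hasStrictDerivAt 0 z).hasDerivAt
  have hMderiv : ∀ z, HasDerivAt M (z ^ 3 • e (t + z)) z := fun z =>
    (hcM.integral_hasStrictDerivAt 0 z).hasDerivAt
  have hL0 : L 0 = 0 := intervalIntegral.integral_same
  have hK0 : K 0 = 0 := intervalIntegral.integral_same
  have hM0 : M 0 = 0 := intervalIntegral.integral_same
  -- inner integral identity
  have hinner : ∀ χ : ℝ, (∫ ν in (0:ℝ)..χ, (e (t + χ) - e (t + ν))) = χ • e (t + χ) - L χ := by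
    intro χ
    rw [intervalIntegral.integral_sub intervalIntegrable_const (hce.intervalIntegrable 0 χ),
      intervalIntegral.integral_const]
    simp [hLdef]
  -- Lemma B : ∫₀^z L = z • L z - K z
  have hB : ∀ z : ℝ, (∫ χ in (0:ℝ)..z, L χ) = z • L z - K z := by
    have hdiff : ∀ z : ℝ,
        HasDerivAt (fun y => (∫ χ in (0:ℝ)..y, L χ) - (y • L y - K y)) 0 z := by
      intro z
      have h1 : HasDerivAt (fun y => ∫ χ in (0:ℝ)..y, L χ) (L z) z :=
        (hLcont.integral_hasStrictDerivAt 0 z).hasDerivAt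
      have h2 := (hasDerivAt_id z).smul (hLderiv z)
      simp only [id_eq, one_smul] at h2
      have h3 := h2.sub (hKderiv z)
      have h4 := h1.sub h3
      convert h4 using 1
      · rfl
      abel
    have hcz := is_const_of_deriv_eq_zero
      (f := fun y => (∫ χ in (0:ℝ)..y, L χ) - (y • L y - K y))
      (fun x => (hdiff x).differentiableAt) (fun x => (hdiff x).deriv)
    intro z
    have hz := hcz z 0
    simp only [intervalIntegral.integral_same, zero_smul, hK0, hL0] at hz
    simp only [zero_sub, sub_zero, neg_zero, sub_neg_eq_add, add_zero, sub_zero] at hz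
    rw [sub_eq_zero] at hz
    exact hz
  -- combined inner double integral
  have hJint : ∀ z : ℝ,
      (∫ χ in (0:ℝ)..z, ∫ ν in (0:ℝ)..χ, (e (t + χ) - e (t + ν)))
        = (2:ℝ) • K z - z • L z := by
    intro z
    have hcongr : (∫ χ in (0:ℝ)..z, ∫ ν in (0:ℝ)..χ, (e (t + χ) - e (t + ν)))
        = ∫ χ in (0:ℝ)..z, (χ • e (t + χ) - L χ) :=
      intervalIntegral.integral_congr fun χ _ => hinner χ
    rw [hcongr, intervalIntegral.integral_sub (hcK.intervalIntegrable 0 z)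
      (hLcont.intervalIntegrable 0 z), hB z, hKdef]
    module
  set J : ℝ → E := fun z => ∫ χ in (0:ℝ)..z, ∫ ν in (0:ℝ)..χ, (e (t + χ) - e (t + ν))
    with hJdef
  have hJ : ∀ z, J z = (2:ℝ) • K z - z • L z := fun z => hJint z
  have hJcont : Continuous J := by
    rw [hJdef]
    have hc : Continuous fun χ : ℝ => χ • e (t + χ) - L χ := hcK.sub hLcont
    apply continuous_primitive
    intro a b
    apply IntervalIntegrable.congr_ae (hc.intervalIntegrable a b)
    filter_upwards with χ using (hinner χ).symm
  set F : ℝ → E := fun s => (-(1 / 12 : ℝ)) • ∫ ζ in (0:ℝ)..s, ζ • J ζ with hFdef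
  set G : ℝ → E := fun s =>
    (1 / 36 : ℝ) • ((2:ℝ) • M s - (3 * s ^ 2) • K s + s ^ 3 • L s) with hGdef
  have hFG : ∀ s, F s = G s := by
    have hdiff : ∀ s : ℝ, HasDerivAt (fun y => F y - G y) 0 s := by
      intro s
      have hF : HasDerivAt F ((-(1 / 12 : ℝ)) • (s • J s)) s := by
        apply HasDerivAt.const_smul
        exact ((continuous_id.smul hJcont).integral_hasStrictDerivAt 0 s).hasDerivAt
      have hc2 : HasDerivAt (fun y : ℝ => 3 * y ^ 2) (3 * (2 * s)) s := by
        simpa using ((hasDerivAt_pow 2 s).const_mul (3:ℝ))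
      have h2 := hc2.smul (hKderiv s)
      have hc3 : HasDerivAt (fun y : ℝ => y ^ 3) (3 * s ^ 2) s := by
        simpa using (hasDerivAt_pow 3 s)
      have h3 := hc3.smul (hLderiv s)
      have hG : HasDerivAt G ((1 / 36 : ℝ) •
          (((2:ℝ) • (s ^ 3 • e (t + s))
            - ((3 * s ^ 2) • (s • e (t + s)) + (3 * (2 * s)) • K s))
            + (s ^ 3 • e (t + s) + (3 * s ^ 2) • L s))) s := by
        apply HasDerivAt.const_smul
        exact (((hMderiv s).const_smul (2:ℝ)).sub h2).add h3
      have h5 := hF.sub hG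
      convert h5 using 1
      · rfl
      rw [hJ s]
      module
    have hcz := is_const_of_deriv_eq_zero (f := fun y => F y - G y)
      (fun x => (hdiff x).differentiableAt) (fun x => (hdiff x).deriv)
    intro s
    have hz := hcz s 0
    have hF0 : F 0 = 0 := by rw [hFdef]; simp
    have hG0 : G 0 = 0 := by rw [hGdef]; simp only [hL0, hK0, hM0]; simp
    rw [hF0, hG0, sub_zero] at hz
    exact sub_eq_zero.mp hz
  -- conclude
  have hmain := hFG h
  rw [hFdef, hGdef] at hmain
  simp only at hmain
  rw [hmain]
  congr 1
  have hsplit : (∫ ζ in (0:ℝ)..h, (2 * ζ ^ 3 - 3 * h ^ 2 * ζ + h ^ 3) • e (t + ζ))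
      = ∫ ζ in (0:ℝ)..h, (((2:ℝ) • (ζ ^ 3 • e (t + ζ)) - (3 * h ^ 2) • (ζ • e (t + ζ)))
          + (h ^ 3 : ℝ) • e (t + ζ)) := by
    apply intervalIntegral.integral_congr
    intro ζ _
    module
  have i1 : IntervalIntegrable (fun ζ : ℝ => (2:ℝ) • (ζ ^ 3 • e (t + ζ))) volume 0 h :=
    (hcM.const_smul (2:ℝ)).intervalIntegrable 0 h
  have i2 : IntervalIntegrable (fun ζ : ℝ => (3 * h ^ 2) • (ζ • e (t + ζ))) volume 0 h :=
    (hcK.const_smul (3 * h ^ 2)).intervalIntegrable 0 h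
  have i3 : IntervalIntegrable (fun ζ : ℝ => (h ^ 3 : ℝ) • e (t + ζ)) volume 0 h :=
    (hce.const_smul (h ^ 3 : ℝ)).intervalIntegrable 0 h
  rw [hsplit, intervalIntegral.integral_add (i1.sub i2) i3,
    intervalIntegral.integral_sub i1 i2,
    intervalIntegral.integral_smul, intervalIntegral.integral_smul,
    intervalIntegral.integral_smul, hMdef, hKdef, hLdef]
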